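/- For every real number t with |t| ≤ 1 and every real α ≥ 1.60, one has α·t·(1 + t/2) ≤ e^{αt} − 1. -/

import Mathlib

open Real

lemma anti_aux {f f' : ℝ → ℝ} (hf : ∀ x, HasDerivAt f (f' x) x)
    (h' : ∀ x ≤ (0:ℝ), f' x ≤ 0) {x : ℝ} (hx : x ≤ 0) : f 0 ≤ f x := by
  have hanti : AntitoneOn f (Set.Iic 0) := by
    apply antitoneOn_of_deriv_nonpos (convex_Iic 0)
      (fun y _ => (hf y).continuousAt.continuousWithinAt)
      (fun y _ => (hf y).differentiableAt.differentiableWithinAt)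
    intro y hy
    rw [(hf y).deriv]
    exact h' y (le_of_lt (by simpa using hy))
  exact hanti hx (Set.self_mem_Iic) hx

lemma mono_aux {f f' : ℝ → ℝ} (hf : ∀ x, HasDerivAt f (f' x) x)
    (h' : ∀ x, 0 ≤ x → 0 ≤ f' x) {x : ℝ} (hx : 0 ≤ x) : f 0 ≤ f x := by
  have hmono : MonotoneOn f (Set.Ici 0) := by
    apply monotoneOn_of_deriv_nonneg (convex_Ici 0)
      (fun y _ => (hf y).continuousAt.continuousWithinAt)
      (fun y _ => (hf y).differentiableAt.differentiableWithinAt)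
    intro y hy
    rw [(hf y).deriv]
    exact h' y (le_of_lt (by simpa using hy))
  exact hmono Set.self_mem_Ici hx hx

lemma hd1 (y : ℝ) : HasDerivAt (fun z : ℝ => 1 + z) 1 y := by
  exact (hasDerivAt_id' y).const_add 1

lemma hd2 (y : ℝ) : HasDerivAt (fun z : ℝ => 1 + z + z^2/2) (1 + y) y := by
  have := (hd1 y).add ((hasDerivAt_pow 2 y).div_const 2)
  exact this.congr_deriv (by push_cast; ring)

lemma hd3 (y : ℝ) : HasDerivAt (fun z : ℝ => 1 + z + z^2/2 + z^3/6) (1 + y + y^2/2) y := by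
  have := (hd2 y).add ((hasDerivAt_pow 3 y).div_const 6)
  exact this.congr_deriv (by push_cast; ring)

lemma hd4 (y : ℝ) :
    HasDerivAt (fun z : ℝ => 1 + z + z^2/2 + z^3/6 + z^4/24) (1 + y + y^2/2 + y^3/6) y := by
  have := (hd3 y).add ((hasDerivAt_pow 4 y).div_const 24)
  exact this.congr_deriv (by push_cast; ring)

lemma hd5 (y : ℝ) :
    HasDerivAt (fun z : ℝ => 1 + z + z^2/2 + z^3/6 + z^4/24 + z^5/120)
      (1 + y + y^2/2 + y^3/6 + y^4/24) y := by
  have := (hd4 y).add ((hasDerivAt_pow 5 y).div_const 120)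
  exact this.congr_deriv (by push_cast; ring)

lemma hd6 (y : ℝ) :
    HasDerivAt (fun z : ℝ => 1 + z + z^2/2 + z^3/6 + z^4/24 + z^5/120 + z^6/720)
      (1 + y + y^2/2 + y^3/6 + y^4/24 + y^5/120) y := by
  have := (hd5 y).add ((hasDerivAt_pow 6 y).div_const 720)
  exact this.congr_deriv (by push_cast; ring)

lemma hd7 (y : ℝ) :
    HasDerivAt (fun z : ℝ => 1 + z + z^2/2 + z^3/6 + z^4/24 + z^5/120 + z^6/720 + z^7/5040)
      (1 + y + y^2/2 + y^3/6 + y^4/24 + y^5/120 + y^6/720) y := by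
  have := (hd6 y).add ((hasDerivAt_pow 7 y).div_const 5040)
  exact this.congr_deriv (by push_cast; ring)

lemma L2 : ∀ x ≤ (0:ℝ), Real.exp x ≤ 1 + x + x^2/2 := by
  intro x hx
  have h := anti_aux (f := fun y => 1 + y + y^2/2 - Real.exp y)
    (f' := fun y => 1 + y - Real.exp y)
    (fun y => (hd2 y).sub (Real.hasDerivAt_exp y))
    (fun y _ => by
      have := Real.add_one_le_exp y
      show 1 + y - Real.exp y ≤ 0
      linarith) hx
  simp at h
  linarith

lemma L3 : ∀ x ≤ (0:ℝ), 1 + x + x^2/2 + x^3/6 ≤ Real.exp x := by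
  intro x hx
  have h := anti_aux (f := fun y => Real.exp y - (1 + y + y^2/2 + y^3/6))
    (f' := fun y => Real.exp y - (1 + y + y^2/2))
    (fun y => (Real.hasDerivAt_exp y).sub (hd3 y))
    (fun y hy => by
      have := L2 y hy
      show Real.exp y - (1 + y + y^2/2) ≤ 0
      linarith) hx
  simp at h
  linarith

lemma L4 : ∀ x ≤ (0:ℝ), Real.exp x ≤ 1 + x + x^2/2 + x^3/6 + x^4/24 := by
  intro x hx
  have h := anti_aux (f := fun y => 1 + y + y^2/2 + y^3/6 + y^4/24 - Real.exp y)
    (f' := fun y => 1 + y + y^2/2 + y^3/6 - Real.exp y)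
    (fun y => (hd4 y).sub (Real.hasDerivAt_exp y))
    (fun y hy => by
      have := L3 y hy
      show 1 + y + y^2/2 + y^3/6 - Real.exp y ≤ 0
      linarith) hx
  simp at h
  linarith

lemma L5 : ∀ x ≤ (0:ℝ), 1 + x + x^2/2 + x^3/6 + x^4/24 + x^5/120 ≤ Real.exp x := by
  intro x hx
  have h := anti_aux
    (f := fun y => Real.exp y - (1 + y + y^2/2 + y^3/6 + y^4/24 + y^5/120))
    (f' := fun y => Real.exp y - (1 + y + y^2/2 + y^3/6 + y^4/24))
    (fun y => (Real.hasDerivAt_exp y).sub (hd5 y))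
    (fun y hy => by
      have := L4 y hy
      show Real.exp y - (1 + y + y^2/2 + y^3/6 + y^4/24) ≤ 0
      linarith) hx
  simp at h
  linarith

lemma L6 : ∀ x ≤ (0:ℝ), Real.exp x ≤ 1 + x + x^2/2 + x^3/6 + x^4/24 + x^5/120 + x^6/720 := by
  intro x hx
  have h := anti_aux
    (f := fun y => 1 + y + y^2/2 + y^3/6 + y^4/24 + y^5/120 + y^6/720 - Real.exp y)
    (f' := fun y => 1 + y + y^2/2 + y^3/6 + y^4/24 + y^5/120 - Real.exp y)
    (fun y => (hd6 y).sub (Real.hasDerivAt_exp y))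
    (fun y hy => by
      have := L5 y hy
      show 1 + y + y^2/2 + y^3/6 + y^4/24 + y^5/120 - Real.exp y ≤ 0
      linarith) hx
  simp at h
  linarith

lemma L7 : ∀ x ≤ (0:ℝ),
    1 + x + x^2/2 + x^3/6 + x^4/24 + x^5/120 + x^6/720 + x^7/5040 ≤ Real.exp x := by
  intro x hx
  have h := anti_aux
    (f := fun y => Real.exp y - (1 + y + y^2/2 + y^3/6 + y^4/24 + y^5/120 + y^6/720 + y^7/5040))
    (f' := fun y => Real.exp y - (1 + y + y^2/2 + y^3/6 + y^4/24 + y^5/120 + y^6/720))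
    (fun y => (Real.hasDerivAt_exp y).sub (hd7 y))
    (fun y hy => by
      have := L6 y hy
      show Real.exp y - (1 + y + y^2/2 + y^3/6 + y^4/24 + y^5/120 + y^6/720) ≤ 0
      linarith) hx
  simp at h
  linarith

lemma Lpos : ∀ x, 0 ≤ x → 1 + x + x^2/2 ≤ Real.exp x := by
  intro x hx
  have h := mono_aux (f := fun y => Real.exp y - (1 + y + y^2/2))
    (f' := fun y => Real.exp y - (1 + y))
    (fun y => (Real.hasDerivAt_exp y).sub (hd2 y))
    (fun y _ => by
      have := Real.add_one_le_exp y
      show 0 ≤ Real.exp y - (1 + y)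
      linarith) hx
  simp at h
  linarith

lemma keyR (a v : ℝ) (ha : 1.6 ≤ a) (hv0 : 0 ≤ v) (hv2 : v ≤ 2) (hva : v ≤ a) :
    a * (v/3 - v^2/12 + v^3/60 - v^4/360 + v^5/2520) ≤ a - 1 := by
  rcases le_total a 2 with h2 | h2
  · nlinarith [sq_nonneg (v - a), sq_nonneg v, sq_nonneg (a - 1.6), sq_nonneg (v - 1.6),
      mul_nonneg hv0 (sub_nonneg.mpr hva), mul_nonneg hv0 (sub_nonneg.mpr hv2),
      mul_nonneg (sub_nonneg.mpr hva) (sub_nonneg.mpr hv2),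
      mul_nonneg (mul_nonneg hv0 hv0) (sub_nonneg.mpr hv2),
      mul_nonneg (mul_nonneg (mul_nonneg hv0 hv0) hv0) (sub_nonneg.mpr hv2),
      mul_nonneg (mul_nonneg (mul_nonneg (mul_nonneg hv0 hv0) hv0) hv0) (sub_nonneg.mpr hv2)]
  · -- a ≥ 2 : enough that R(v) ≤ 1/2 and a-1 ≥ a/2
    have hR : v/3 - v^2/12 + v^3/60 - v^4/360 + v^5/2520 ≤ 1/2 := by
      nlinarith [mul_nonneg hv0 (sub_nonneg.mpr hv2), sq_nonneg v, sq_nonneg (v-2),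
        mul_nonneg (mul_nonneg hv0 hv0) (sub_nonneg.mpr hv2),
        mul_nonneg (mul_nonneg (mul_nonneg hv0 hv0) hv0) (sub_nonneg.mpr hv2)]
    nlinarith [hR]

theorem exp_lower_bound_alpha_ge (t α : ℝ) (ht : |t| ≤ 1) (hα : 1.60 ≤ α) :
    α * t * (1 + t / 2) ≤ Real.exp (α * t) - 1 := by
  obtain ⟨ht1, ht2⟩ := abs_le.mp ht
  rcases le_or_gt 0 t with htp | htn
  · -- t ≥ 0
    have hx : 0 ≤ α * t := mul_nonneg (by linarith) htp
    have h := Lpos (α * t) hx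
    nlinarith [mul_nonneg (mul_nonneg (sub_nonneg.mpr hα) htp) htp, sq_nonneg (α*t)]
  · -- t < 0
    by_cases hneg : 1 + α * t * (1 + t / 2) ≤ 0
    · have := Real.exp_pos (α * t)
      linarith
    · push_neg at hneg
      have hα0 : (0:ℝ) < α := by linarith
      have hx : α * t ≤ 0 := mul_nonpos_of_nonneg_of_nonpos (by linarith) htn.le
      have h7 := L7 (α * t) hx
      have hv0 : 0 ≤ α * (-t) := mul_nonneg hα0.le (by linarith)
      have hv2 : α * (-t) ≤ 2 := by nlinarith [hneg]
      have hva : α * (-t) ≤ α := by nlinarith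
      have hα' : (1.6:ℝ) ≤ α := by norm_num at hα ⊢; linarith
      have hkey := keyR α (α * (-t)) hα' hv0 hv2 hva
      have hhalf : 0 ≤ α * t^2 / 2 := by positivity
      have hprod := mul_nonneg hhalf (sub_nonneg.mpr hkey)
      nlinarith [h7, hprod]
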